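/- Let S be a semigroup of Hénon maps with radius of filtration R_S, R > R_S. Then the weak escaping set U_S^+(weak) equals the increasing union over k ≥ 1 of the sets ⋂_{h ∈ G_k} h^{-1}(V_R^+), and the strong escaping set U_S^+(strong) equals the union over k ≥ 1 of ⋃_{h ∈ G_k} h^{-1}(V_R^+). -/

import Mathlib

open Filter Metric Set Bornology

noncomputable section

/-- A generalized Hénon map of ℂ²: `H (x,y) = (y, p(y) - a x)` with `a ≠ 0` and
`deg p = d ≥ 2`. -/
def IsGenHenonDeg (h : ℂ × ℂ → ℂ × ℂ) (d : ℕ) : Prop :=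
  ∃ (a : ℂ) (p : Polynomial ℂ), a ≠ 0 ∧ 2 ≤ p.natDegree ∧ p.natDegree = d ∧
    ∀ x y : ℂ, h (x, y) = (y, p.eval y - a * x)

/-- A Hénon map of degree `d`: a finite (nonempty) composition of generalized
Hénon maps, `d` being the product of the degrees of the factors. -/
def IsHenonDeg (h : ℂ × ℂ → ℂ × ℂ) (d : ℕ) : Prop :=
  ∃ l : List ((ℂ × ℂ → ℂ × ℂ) × ℕ), l ≠ [] ∧
    (∀ gd ∈ l, IsGenHenonDeg gd.1 gd.2) ∧
    h = (l.map Prod.fst).foldr (· ∘ ·) id ∧ d = (l.map Prod.snd).prod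

def IsHenon (h : ℂ × ℂ → ℂ × ℂ) : Prop := ∃ d, IsHenonDeg h d

/-- The polydisk `V_R = {max(|x|,|y|) ≤ R}`. -/
def VR (R : ℝ) : Set (ℂ × ℂ) := {z | max ‖z.1‖ ‖z.2‖ ≤ R}

/-- `V_R^+ = {|y| ≥ max(|x|, R)}`. -/
def VRp (R : ℝ) : Set (ℂ × ℂ) := {z | max ‖z.1‖ R ≤ ‖z.2‖}

/-- `V_R^- = {|x| ≥ max(|y|, R)}`. -/
def VRm (R : ℝ) : Set (ℂ × ℂ) := {z | max ‖z.2‖ R ≤ ‖z.1‖}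

/-- The element of the semigroup given by the word `w`:
`H_{w 0} ∘ H_{w 1} ∘ ⋯ ∘ H_{w (k-1)}`. -/
def wordProd {n : ℕ} (H : Fin n → Equiv.Perm (ℂ × ℂ)) {k : ℕ}
    (w : Fin k → Fin n) : Equiv.Perm (ℂ × ℂ) :=
  (List.ofFn fun j => H (w j)).prod

/-- Strong filled positive Julia set of the semigroup `S`: points whose forward
images under every sequence in `S` stay bounded. -/
def KSstrongP (S : Set (Equiv.Perm (ℂ × ℂ))) : Set (ℂ × ℂ) :=
  {z | ∀ h : ℕ → Equiv.Perm (ℂ × ℂ), (∀ k, h k ∈ S) →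
    IsBounded (Set.range fun k => h k z)}

/-- Strong filled negative Julia set of the semigroup `S`. -/
def KSstrongM (S : Set (Equiv.Perm (ℂ × ℂ))) : Set (ℂ × ℂ) :=
  {z | ∀ h : ℕ → Equiv.Perm (ℂ × ℂ), (∀ k, h k ∈ S) →
    IsBounded (Set.range fun k => (h k)⁻¹ z)}

/-- Weak filled positive Julia set: there exist elements of word lengths
`n_k → ∞` with bounded images. -/
def KSweakP {n : ℕ} (H : Fin n → Equiv.Perm (ℂ × ℂ)) : Set (ℂ × ℂ) :=
  {z | ∃ (nk : ℕ → ℕ) (w : (k : ℕ) → Fin (nk k) → Fin n),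
    Tendsto nk atTop atTop ∧ IsBounded (Set.range fun k => wordProd H (w k) z)}

/-- Weak filled negative Julia set. -/
def KSweakM {n : ℕ} (H : Fin n → Equiv.Perm (ℂ × ℂ)) : Set (ℂ × ℂ) :=
  {z | ∃ (nk : ℕ → ℕ) (w : (k : ℕ) → Fin (nk k) → Fin n),
    Tendsto nk atTop atTop ∧ IsBounded (Set.range fun k => (wordProd H (w k))⁻¹ z)}

/-! ### Auxiliary machinery -/

section FiltrationAux

/-- Weak filtration property: `h` preserves `V_R^+` without shrinking `|y|`, and
pulls `V_R^-` back into `V_R^-` without shrinking `|x|`. -/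
def Good1 (h : ℂ × ℂ → ℂ × ℂ) (R : ℝ) : Prop :=
  (∀ z, z ∈ VRp R → h z ∈ VRp R ∧ ‖z.2‖ ≤ ‖(h z).2‖) ∧
  (∀ z, h z ∈ VRm R → z ∈ VRm R ∧ ‖(h z).1‖ ≤ ‖z.1‖)

/-- Strong filtration property: as `Good1` but with doubling. -/
def Good2 (h : ℂ × ℂ → ℂ × ℂ) (R : ℝ) : Prop :=
  (∀ z, z ∈ VRp R → h z ∈ VRp R ∧ 2 * ‖z.2‖ ≤ ‖(h z).2‖) ∧
  (∀ z, h z ∈ VRm R → z ∈ VRm R ∧ 2 * ‖(h z).1‖ ≤ ‖z.1‖)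

lemma Good2.good1 {h R} (hg : Good2 h R) : Good1 h R := by
  obtain ⟨h1, h2⟩ := hg
  refine ⟨fun z hz => ?_, fun z hz => ?_⟩
  · obtain ⟨a, b⟩ := h1 z hz
    exact ⟨a, by nlinarith [norm_nonneg z.2]⟩
  · obtain ⟨a, b⟩ := h2 z hz
    exact ⟨a, by nlinarith [norm_nonneg (h z).1]⟩

lemma good1_id (R : ℝ) : Good1 id R :=
  ⟨fun z hz => ⟨hz, le_refl _⟩, fun z hz => ⟨hz, le_refl _⟩⟩

lemma good1_comp {g f : ℂ × ℂ → ℂ × ℂ} {R} (hg : Good1 g R) (hf : Good1 f R) :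
    Good1 (g ∘ f) R := by
  refine ⟨fun z hz => ?_, fun z hz => ?_⟩
  · obtain ⟨a1, b1⟩ := hf.1 z hz
    obtain ⟨a2, b2⟩ := hg.1 _ a1
    exact ⟨a2, le_trans b1 b2⟩
  · obtain ⟨a2, b2⟩ := hg.2 (f z) hz
    obtain ⟨a1, b1⟩ := hf.2 z a2
    exact ⟨a1, le_trans b2 b1⟩

lemma good2_comp {g f : ℂ × ℂ → ℂ × ℂ} {R} (hg : Good2 g R) (hf : Good1 f R) :
    Good2 (g ∘ f) R := by
  refine ⟨fun z hz => ?_, fun z hz => ?_⟩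
  · obtain ⟨a1, b1⟩ := hf.1 z hz
    obtain ⟨a2, b2⟩ := hg.1 _ a1
    exact ⟨a2, by simp only [Function.comp_apply]; nlinarith⟩
  · obtain ⟨a2, b2⟩ := hg.2 (f z) hz
    obtain ⟨a1, b1⟩ := hf.2 z a2
    refine ⟨a1, ?_⟩
    simp only [Function.comp_apply] at *
    nlinarith [norm_nonneg (g (f z)).1]

open Polynomial in
lemma poly_lower (p : Polynomial ℂ) (hdeg : 2 ≤ p.natDegree) (M : ℝ) :
    ∃ R1 : ℝ, 1 ≤ R1 ∧ ∀ y : ℂ, R1 ≤ ‖y‖ → M * ‖y‖ ≤ ‖p.eval y‖ := by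
  set q := p /ₘ X with hq
  have hqdeg : 1 ≤ q.natDegree := by
    have := natDegree_divByMonic p (monic_X (R := ℂ))
    rw [natDegree_X] at this
    rw [this]
    omega
  have hqpos : 0 < q.degree := natDegree_pos_iff_degree_pos.mp (by omega)
  have htend : Tendsto (fun y : ℂ => ‖q.eval y‖) (comap norm atTop) atTop :=
    q.tendsto_norm_atTop hqpos tendsto_comap
  have hev : ∀ᶠ y : ℂ in comap norm atTop, M + ‖p.eval 0‖ ≤ ‖q.eval y‖ :=
    htend.eventually_ge_atTop _
  rw [eventually_comap] at hev
  obtain ⟨b, hb⟩ := eventually_atTop.mp hev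
  refine ⟨max b 1, le_max_right _ _, fun y hy => ?_⟩
  have hy1 : (1:ℝ) ≤ ‖y‖ := le_trans (le_max_right b 1) hy
  have hyb : b ≤ ‖y‖ := le_trans (le_max_left b 1) hy
  have hqy : M + ‖p.eval 0‖ ≤ ‖q.eval y‖ := hb ‖y‖ hyb y rfl
  have hpy : p.eval y = p.eval 0 + y * q.eval y := by
    conv_lhs => rw [← modByMonic_add_div p (X : ℂ[X])]
    simp [modByMonic_X, hq]
  have h1 : ‖y * q.eval y‖ - ‖p.eval 0‖ ≤ ‖p.eval y‖ := by
    have := norm_sub_norm_le (y * q.eval y) (-(p.eval 0))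
    simp only [norm_neg, sub_neg_eq_add] at this
    calc ‖y * q.eval y‖ - ‖p.eval 0‖ ≤ ‖y * q.eval y + p.eval 0‖ := this
      _ = ‖p.eval y‖ := by rw [hpy]; ring_nf
  have h2 : ‖y * q.eval y‖ = ‖y‖ * ‖q.eval y‖ := norm_mul _ _
  nlinarith [norm_nonneg (p.eval 0), norm_nonneg (q.eval y)]

lemma genHenon_good {h : ℂ × ℂ → ℂ × ℂ} {d : ℕ} (hh : IsGenHenonDeg h d) :
    ∃ R0 : ℝ, 1 ≤ R0 ∧ ∀ R, R0 ≤ R → Good2 h R := by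
  obtain ⟨a, p, ha, hdeg, -, hfun⟩ := hh
  obtain ⟨R1, hR11, hbound⟩ := poly_lower p hdeg (3 * ‖a‖ + 3)
  have hane : (0:ℝ) < ‖a‖ := norm_pos_iff.mpr ha
  refine ⟨R1, hR11, fun R hR => ?_⟩
  have hz : ∀ z : ℂ × ℂ, h z = (z.2, p.eval z.2 - a * z.1) := fun z => by
    calc h z = h (z.1, z.2) := by rw [Prod.mk.eta]
      _ = _ := hfun z.1 z.2
  constructor
  · intro z hzp
    rw [hz z]
    simp only [VRp, Set.mem_setOf_eq, max_le_iff] at hzp ⊢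
    obtain ⟨hx, hRy⟩ := hzp
    have hy1 : R1 ≤ ‖z.2‖ := le_trans hR hRy
    have hb := hbound z.2 hy1
    have hlow : ‖p.eval z.2‖ - ‖a * z.1‖ ≤ ‖p.eval z.2 - a * z.1‖ := norm_sub_norm_le _ _
    have hax : ‖a * z.1‖ = ‖a‖ * ‖z.1‖ := norm_mul _ _
    have hx2 : ‖a‖ * ‖z.1‖ ≤ ‖a‖ * ‖z.2‖ := by nlinarith
    have key : 3 * ‖z.2‖ ≤ ‖p.eval z.2 - a * z.1‖ := by nlinarith
    have hy0 : (0:ℝ) ≤ ‖z.2‖ := norm_nonneg _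
    exact ⟨⟨by linarith, by linarith⟩, by linarith⟩
  · intro z hzm
    rw [hz z] at hzm ⊢
    simp only [VRm, Set.mem_setOf_eq, max_le_iff] at hzm ⊢
    obtain ⟨hpy, hRy⟩ := hzm
    have hy1 : R1 ≤ ‖z.2‖ := le_trans hR hRy
    have hb := hbound z.2 hy1
    have hlow : ‖p.eval z.2‖ - ‖p.eval z.2 - a * z.1‖ ≤ ‖a * z.1‖ := by
      have := norm_sub_norm_le (p.eval z.2) (p.eval z.2 - a * z.1)
      simpa using this
    have hax : ‖a * z.1‖ = ‖a‖ * ‖z.1‖ := norm_mul _ _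
    have key : 3 * ‖z.2‖ ≤ ‖z.1‖ := by nlinarith
    have hy0 : (0:ℝ) ≤ ‖z.2‖ := norm_nonneg _
    exact ⟨⟨by linarith, by linarith⟩, by linarith⟩

lemma list_good (l : List ((ℂ × ℂ → ℂ × ℂ) × ℕ)) (hl : ∀ gd ∈ l, IsGenHenonDeg gd.1 gd.2) :
    ∃ R0 : ℝ, 1 ≤ R0 ∧ ∀ R, R0 ≤ R →
      Good1 ((l.map Prod.fst).foldr (· ∘ ·) id) R ∧
      (l ≠ [] → Good2 ((l.map Prod.fst).foldr (· ∘ ·) id) R) := by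
  induction l with
  | nil =>
    exact ⟨1, le_refl _, fun R _ => ⟨by simpa using good1_id R, fun hc => absurd rfl hc⟩⟩
  | cons g l ih =>
    obtain ⟨R1, hR11, h1⟩ := genHenon_good (hl g List.mem_cons_self)
    obtain ⟨R2, hR21, h2⟩ := ih (fun gd hgd => hl gd (List.mem_cons_of_mem g hgd))
    refine ⟨max R1 R2, le_trans hR11 (le_max_left _ _), fun R hR => ?_⟩
    have hfold : ((g :: l).map Prod.fst).foldr (· ∘ ·) id
        = g.1 ∘ (l.map Prod.fst).foldr (· ∘ ·) id := rfl
    have hg2 : Good2 g.1 R := h1 R (le_trans (le_max_left _ _) hR)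
    have hl1 : Good1 ((l.map Prod.fst).foldr (· ∘ ·) id) R :=
      (h2 R (le_trans (le_max_right _ _) hR)).1
    have hcomp : Good2 (((g :: l).map Prod.fst).foldr (· ∘ ·) id) R := by
      rw [hfold]; exact good2_comp hg2 hl1
    exact ⟨hcomp.good1, fun _ => hcomp⟩

lemma henon_good {h : ℂ × ℂ → ℂ × ℂ} (hh : IsHenon h) :
    ∃ R0 : ℝ, 1 ≤ R0 ∧ ∀ R, R0 ≤ R → Good2 h R := by
  obtain ⟨d, l, hne, hgens, hcomp, -⟩ := hh
  obtain ⟨R0, hR0, hgood⟩ := list_good l hgens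
  exact ⟨R0, hR0, fun R hR => by rw [hcomp]; exact (hgood R hR).2 hne⟩

lemma not_vrp_not_vrm {R : ℝ} {z : ℂ × ℂ} (h1 : z ∉ VRp R) (h2 : z ∉ VRm R) :
    ‖z.1‖ ≤ R ∧ ‖z.2‖ ≤ R := by
  simp only [VRp, VRm, Set.mem_setOf_eq, not_le] at h1 h2
  rcases lt_max_iff.mp h1 with ha | ha <;> rcases lt_max_iff.mp h2 with hb | hb <;>
    constructor <;> linarith

end FiltrationAux

section WordLemmas

variable {n : ℕ} (H : Fin n → Equiv.Perm (ℂ × ℂ))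

lemma wordProd_nil (w : Fin 0 → Fin n) : wordProd H w = 1 := by
  simp [wordProd]

lemma wordProd_succ {k : ℕ} (w : Fin (k + 1) → Fin n) :
    wordProd H w = H (w 0) * wordProd H (fun i : Fin k => w i.succ) := by
  unfold wordProd
  rw [List.ofFn_succ, List.prod_cons]

lemma wordProd_split (a b : ℕ) (w : Fin (a + b) → Fin n) :
    wordProd H w = wordProd H (fun i : Fin a => w (Fin.castAdd b i)) *
      wordProd H (fun j : Fin b => w (Fin.natAdd a j)) := by
  unfold wordProd
  rw [show (List.ofFn fun j : Fin (a + b) => H (w j)) =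
      (List.ofFn fun i : Fin a => H (w (Fin.castAdd b i))) ++
      (List.ofFn fun j : Fin b => H (w (Fin.natAdd a j))) from
    List.ofFn_add (f := fun j : Fin (a + b) => H (w j)), List.prod_append]

lemma wordProd_cast {a b : ℕ} (e : a = b) (w : Fin b → Fin n) :
    wordProd H (fun i : Fin a => w (Fin.cast e i)) = wordProd H w := by
  subst e
  rfl

lemma wordProd_one (i : Fin n) : wordProd H (fun _ : Fin 1 => i) = H i := by
  simp [wordProd]

lemma wordProd_append {a b : ℕ} (u : Fin a → Fin n) (v : Fin b → Fin n) :
    wordProd H (Fin.append u v) = wordProd H u * wordProd H v := by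
  rw [wordProd_split H a b]
  have h1 : (fun i : Fin a => Fin.append u v (Fin.castAdd b i)) = u :=
    funext fun i => Fin.append_left u v i
  have h2 : (fun j : Fin b => Fin.append u v (Fin.natAdd a j)) = v :=
    funext fun j => Fin.append_right u v j
  rw [h1, h2]

lemma word_mem : ∀ (k : ℕ) (w : Fin (k + 1) → Fin n),
    wordProd H w ∈ Subsemigroup.closure (Set.range H) := by
  intro k
  induction k with
  | zero =>
    intro w
    rw [wordProd_succ, wordProd_nil, mul_one]
    exact Subsemigroup.subset_closure ⟨w 0, rfl⟩
  | succ k ih =>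
    intro w
    rw [wordProd_succ]
    exact mul_mem (Subsemigroup.subset_closure ⟨w 0, rfl⟩) (ih _)

variable {R : ℝ} (hGood : ∀ i, Good2 (⇑(H i)) R)

include hGood

lemma word_growth : ∀ (k : ℕ) (w : Fin k → Fin n) (z : ℂ × ℂ), z ∈ VRp R →
    wordProd H w z ∈ VRp R ∧ 2 ^ k * ‖z.2‖ ≤ ‖(wordProd H w z).2‖ := by
  intro k
  induction k with
  | zero =>
    intro w z hz
    rw [wordProd_nil]
    simpa using hz
  | succ k ih =>
    intro w z hz
    rw [wordProd_succ, Equiv.Perm.mul_apply]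
    obtain ⟨hu, hgrow⟩ := ih (fun i => w i.succ) z hz
    obtain ⟨h1, h2⟩ := (hGood (w 0)).1 _ hu
    refine ⟨h1, ?_⟩
    have h2k : (0:ℝ) ≤ 2 ^ k := by positivity
    calc (2:ℝ) ^ (k + 1) * ‖z.2‖ = 2 * (2 ^ k * ‖z.2‖) := by ring
      _ ≤ 2 * ‖(wordProd H (fun i => w i.succ) z).2‖ := by linarith
      _ ≤ _ := h2

lemma word_back : ∀ (k : ℕ) (w : Fin k → Fin n) (z : ℂ × ℂ),
    wordProd H w z ∈ VRm R →
    z ∈ VRm R ∧ 2 ^ k * ‖(wordProd H w z).1‖ ≤ ‖z.1‖ := by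
  intro k
  induction k with
  | zero =>
    intro w z hz
    rw [wordProd_nil] at hz ⊢
    simpa using hz
  | succ k ih =>
    intro w z hz
    rw [wordProd_succ, Equiv.Perm.mul_apply] at hz ⊢
    obtain ⟨hu, h2⟩ := (hGood (w 0)).2 _ hz
    obtain ⟨h1, hgrow⟩ := ih (fun i => w i.succ) z hu
    refine ⟨h1, ?_⟩
    have h2k : (0:ℝ) ≤ 2 ^ k := by positivity
    calc (2:ℝ) ^ (k + 1) * ‖(H (w 0) (wordProd H (fun i => w i.succ) z)).1‖
        = 2 ^ k * (2 * ‖(H (w 0) (wordProd H (fun i => w i.succ) z)).1‖) := by ring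
      _ ≤ 2 ^ k * ‖(wordProd H (fun i => w i.succ) z).1‖ := by nlinarith
      _ ≤ ‖z.1‖ := hgrow

end WordLemmas


/-- for `R` beyond the radius of filtration, the weak escaping set
(complement of the weak filled Julia set) equals `⋃_{k≥1} ⋂_{h ∈ G_k} h⁻¹(V_R^+)`,
and the strong escaping set (complement of the strong filled Julia set) equals
`⋃_{k≥1} ⋃_{h ∈ G_k} h⁻¹(V_R^+)`. -/
theorem escaping_sets_description (n : ℕ) (hn : 0 < n)
    (H : Fin n → Equiv.Perm (ℂ × ℂ)) (hH : ∀ i, IsHenon ⇑(H i)) :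
    ∃ RS > (0 : ℝ), ∀ R > RS,
      ((KSweakP H)ᶜ =
        ⋃ k : ℕ, ⋂ w : Fin (k + 1) → Fin n, ⇑(wordProd H w) ⁻¹' VRp R) ∧
      ((KSstrongP (Subsemigroup.closure (Set.range H) : Set (Equiv.Perm (ℂ × ℂ))))ᶜ =
        ⋃ k : ℕ, ⋃ w : Fin (k + 1) → Fin n, ⇑(wordProd H w) ⁻¹' VRp R) := by
  have hch : ∀ i, ∃ R0 : ℝ, 1 ≤ R0 ∧ ∀ R, R0 ≤ R → Good2 (⇑(H i)) R :=
    fun i => henon_good (hH i)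
  choose f hf1 hf2 using hch
  refine ⟨1 + ∑ i, |f i|, by positivity, fun R hR => ?_⟩
  have hsum0 : (0:ℝ) ≤ ∑ j, |f j| := Finset.sum_nonneg fun j _ => abs_nonneg _
  have hfle : ∀ i, f i ≤ R := by
    intro i
    have h1 : |f i| ≤ ∑ j, |f j| :=
      Finset.single_le_sum (fun j _ => abs_nonneg (f j)) (Finset.mem_univ i)
    have h2 := le_abs_self (f i)
    linarith
  have hGood : ∀ i, Good2 (⇑(H i)) R := fun i => hf2 i R (hfle i)
  have hR1 : (1:ℝ) ≤ R := by linarith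
  have hR0 : (0:ℝ) < R := by linarith
  constructor
  · -- weak escaping set
    ext z
    simp only [Set.mem_compl_iff, Set.mem_iUnion, Set.mem_iInter, Set.mem_preimage]
    constructor
    · intro hz
      by_contra hc
      push_neg at hc
      choose w hw using hc
      apply hz
      simp only [KSweakP, Set.mem_setOf_eq]
      obtain ⟨K, hK⟩ := pow_unbounded_of_one_lt (‖z.1‖ / R) one_lt_two
      have hnotm : ∀ k, K ≤ k → wordProd H (w k) z ∉ VRm R := by
        intro k hk hm
        obtain ⟨-, hb⟩ := word_back H hGood (k + 1) (w k) z hm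
        have hR' : R ≤ ‖(wordProd H (w k) z).1‖ := le_trans (le_max_right _ _) hm
        have hmono : (2:ℝ) ^ K ≤ 2 ^ (k + 1) :=
          pow_le_pow_right₀ one_le_two (by omega)
        have h2 : 2 ^ K * R ≤ 2 ^ (k + 1) * ‖(wordProd H (w k) z).1‖ := by
          have hp : (0:ℝ) < 2 ^ K := by positivity
          nlinarith
        rw [div_lt_iff₀ hR0] at hK
        linarith
      refine ⟨fun k => (k + K) + 1, fun k => w (k + K), tendsto_add_atTop_nat (K + 1), ?_⟩
      rw [isBounded_iff_forall_norm_le]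
      refine ⟨R, ?_⟩
      rintro x ⟨k, rfl⟩
      obtain ⟨ha, hb⟩ := not_vrp_not_vrm (hw (k + K)) (hnotm (k + K) (by omega))
      rw [Prod.norm_def]
      exact max_le ha hb
    · rintro ⟨k0, hk0⟩ hmem
      simp only [KSweakP, Set.mem_setOf_eq] at hmem
      obtain ⟨nk, ww, hnk, hbd⟩ := hmem
      rw [isBounded_iff_forall_norm_le] at hbd
      obtain ⟨C, hC⟩ := hbd
      obtain ⟨m, hm⟩ := pow_unbounded_of_one_lt (C / R) one_lt_two
      obtain ⟨k, hk⟩ := (hnk.eventually_ge_atTop (m + (k0 + 1))).exists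
      have e : (nk k - (k0 + 1)) + (k0 + 1) = nk k := by omega
      set a := nk k - (k0 + 1) with ha
      have ham : m ≤ a := by omega
      have hsplit : wordProd H (ww k) =
          wordProd H (fun i : Fin a => ww k (Fin.cast e (Fin.castAdd (k0 + 1) i))) *
          wordProd H (fun j : Fin (k0 + 1) => ww k (Fin.cast e (Fin.natAdd a j))) := by
        rw [← wordProd_cast H e (ww k), wordProd_split]
      have hu : wordProd H (fun j : Fin (k0 + 1) => ww k (Fin.cast e (Fin.natAdd a j))) z
          ∈ VRp R := hk0 _
      obtain ⟨-, hgrow⟩ := word_growth H hGood a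
        (fun i : Fin a => ww k (Fin.cast e (Fin.castAdd (k0 + 1) i))) _ hu
      have hR' : R ≤
          ‖(wordProd H (fun j : Fin (k0 + 1) => ww k (Fin.cast e (Fin.natAdd a j))) z).2‖ :=
        le_trans (le_max_right _ _) hu
      have hbig : 2 ^ m * R ≤ ‖(wordProd H (ww k) z).2‖ := by
        rw [hsplit, Equiv.Perm.mul_apply]
        have h2a : (2:ℝ) ^ m ≤ 2 ^ a := pow_le_pow_right₀ one_le_two ham
        nlinarith [pow_pos (zero_lt_two (α := ℝ)) m, pow_pos (zero_lt_two (α := ℝ)) a]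
      have hle : ‖(wordProd H (ww k) z).2‖ ≤ C :=
        le_trans (norm_snd_le _) (hC _ ⟨k, rfl⟩)
      rw [div_lt_iff₀ hR0] at hm
      nlinarith [pow_pos (zero_lt_two (α := ℝ)) m]
  · -- strong escaping set
    ext z
    simp only [Set.mem_compl_iff, Set.mem_iUnion, Set.mem_preimage]
    constructor
    · intro hz
      by_contra hc
      push_neg at hc
      apply hz
      simp only [KSstrongP, Set.mem_setOf_eq]
      intro hs hmem
      have hrep : ∀ g ∈ Subsemigroup.closure (Set.range H),
          ∃ (m : ℕ) (w : Fin (m + 1) → Fin n), g = wordProd H w := by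
        intro g hg
        induction hg using Subsemigroup.closure_induction with
        | mem x hx =>
          obtain ⟨i, rfl⟩ := hx
          exact ⟨0, fun _ => i, (wordProd_one H i).symm⟩
        | mul x y hx hy ihx ihy =>
          obtain ⟨m1, w1, rfl⟩ := ihx
          obtain ⟨m2, w2, rfl⟩ := ihy
          exact ⟨m1 + 1 + m2, (Fin.append w1 w2 : Fin ((m1 + 1) + (m2 + 1)) → Fin n),
            (wordProd_append H w1 w2).symm⟩
      rw [isBounded_iff_forall_norm_le]
      refine ⟨max R ‖z.1‖, ?_⟩
      rintro x ⟨k, rfl⟩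
      obtain ⟨m, w, hgw⟩ := hrep (hs k) (hmem k)
      show ‖(hs k) z‖ ≤ max R ‖z.1‖
      rw [hgw]
      have hnp : wordProd H w z ∉ VRp R := hc m w
      by_cases hvm : wordProd H w z ∈ VRm R
      · obtain ⟨-, hb⟩ := word_back H hGood (m + 1) w z hvm
        have h2m : (1:ℝ) ≤ 2 ^ (m + 1) := one_le_pow₀ one_le_two
        have h1 : ‖(wordProd H w z).1‖ ≤ ‖z.1‖ := by
          nlinarith [norm_nonneg (wordProd H w z).1]
        have h2 : ‖(wordProd H w z).2‖ ≤ ‖(wordProd H w z).1‖ :=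
          le_trans (le_max_left _ _) hvm
        rw [Prod.norm_def]
        exact max_le (le_trans h1 (le_max_right _ _))
          (le_trans (le_trans h2 h1) (le_max_right _ _))
      · obtain ⟨ha, hb⟩ := not_vrp_not_vrm hnp hvm
        rw [Prod.norm_def]
        exact max_le (le_trans ha (le_max_left _ _)) (le_trans hb (le_max_left _ _))
    · rintro ⟨k, w, hw⟩ hmem
      simp only [KSstrongP, Set.mem_setOf_eq] at hmem
      set i0 : Fin n := ⟨0, hn⟩
      have hbd := hmem (fun m => wordProd H
          (Fin.append (fun _ : Fin m => i0) w : Fin (m + (k + 1)) → Fin n))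
        (fun m => word_mem H (m + k)
          (Fin.append (fun _ : Fin m => i0) w : Fin (m + (k + 1)) → Fin n))
      rw [isBounded_iff_forall_norm_le] at hbd
      obtain ⟨C, hC⟩ := hbd
      obtain ⟨m, hm⟩ := pow_unbounded_of_one_lt (C / R) one_lt_two
      have hsplit : wordProd H (Fin.append (fun _ : Fin m => i0) w)
          = wordProd H (fun _ : Fin m => i0) * wordProd H w :=
        wordProd_append H _ _
      obtain ⟨-, hgrow⟩ := word_growth H hGood m (fun _ => i0) _ hw
      have hR' : R ≤ ‖(wordProd H w z).2‖ := le_trans (le_max_right _ _) hw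
      have hbig : 2 ^ m * R ≤
          ‖(wordProd H (Fin.append (fun _ : Fin m => i0) w) z).2‖ := by
        rw [hsplit, Equiv.Perm.mul_apply]
        nlinarith [pow_pos (zero_lt_two (α := ℝ)) m]
      have hle := le_trans (norm_snd_le _) (hC _ ⟨m, rfl⟩)
      rw [div_lt_iff₀ hR0] at hm
      linarith
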